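/- The degree-2 part of the homogeneous ideal of the rational normal curve C_d ⊂ P^d has dimension binomial(d,2) as a k-vector space, and the set Γ of the (d−1) + binomial(d−1,2) = binomial(d,2) rank-3 quadrics F_i and G_{i,j} forms a basis of it. -/

import Mathlib

open MvPolynomial

section RNCauxSec
open Finset

namespace RNCaux

variable (k : Type*) [Field k] (d : ℕ)

noncomputable def Z (m : ℕ) : MvPolynomial (Fin (d+1)) k :=
  if h : m < d + 1 then X ⟨m, h⟩ else 0

noncomputable def NN (p q : ℕ) : MvPolynomial (Fin (d+1)) k :=
  Z k d p * Z k d (q+1) - Z k d (p+1) * Z k d q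

noncomputable def Mon (e : ℕ) : MvPolynomial (Fin (d+1)) k :=
  Z k d (e/2) * Z k d ((e+1)/2)

noncomputable def Ff (i : ℕ) : MvPolynomial (Fin (d+1)) k :=
  Z k d i * Z k d (i+2) - Z k d (i+1) * Z k d (i+1)

noncomputable def Gg (i j : ℕ) : MvPolynomial (Fin (d+1)) k :=
  (Z k d i + Z k d j) * (Z k d (i+2) + Z k d (j+2))
    - (Z k d (i+1) + Z k d (j+1)) * (Z k d (i+1) + Z k d (j+1))

noncomputable def phi : MvPolynomial (Fin (d+1)) k →ₐ[k] MvPolynomial (Fin 2) k :=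
  aeval (fun m : Fin (d + 1) => (X 0 : MvPolynomial (Fin 2) k) ^ (d - m.1) * X 1 ^ m.1)

noncomputable def lam (a b : ℕ) : MvPolynomial (Fin (d+1)) k →ₗ[k] k :=
  (aeval (fun v : Fin (d+1) => if v.1 = a ∨ v.1 = b then (1:k) else 0)).toLinearMap
  - (aeval (fun v : Fin (d+1) => if v.1 = a then (1:k) else 0)).toLinearMap
  - (aeval (fun v : Fin (d+1) => if v.1 = b then (1:k) else 0)).toLinearMap

noncomputable def MSpan : Submodule k (MvPolynomial (Fin (d+1)) k) :=
  Submodule.span k {x | ∃ p q : ℕ, p < q ∧ q ≤ d - 1 ∧ x = NN k d p q}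

variable {k d}

lemma Xeq (m : ℕ) (h : m < d + 1) : (X ⟨m, h⟩ : MvPolynomial (Fin (d+1)) k) = Z k d m := by
  unfold Z; rw [dif_pos h]

lemma Zeq (m : ℕ) (h : m ≤ d) : Z k d m = X (⟨m, by omega⟩ : Fin (d+1)) := dif_pos (by omega)

lemma lam_ZZ (a b m n : ℕ) (hab : a ≠ b) (hm : m ≤ d) (hn : n ≤ d) :
    lam k d a b (Z k d m * Z k d n) =
      if (m = a ∧ n = b) ∨ (m = b ∧ n = a) then 1 else 0 := by
  rw [Zeq m hm, Zeq n hn]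
  simp only [lam, LinearMap.sub_apply, AlgHom.toLinearMap_apply, map_mul, aeval_X]
  split_ifs <;> first | (exfalso; omega) | ring

lemma phi_ZZ (m n : ℕ) (hm : m ≤ d) (hn : n ≤ d) :
    phi k d (Z k d m * Z k d n) = X 0 ^ (2*d - (m+n)) * X 1 ^ (m+n) := by
  rw [Zeq m hm, Zeq n hn]
  simp only [phi, map_mul, aeval_X]
  rw [mul_mul_mul_comm, ← pow_add, ← pow_add]
  congr 2
  omega

lemma phi_NN (p q : ℕ) (hp : p + 1 ≤ d) (hq : q + 1 ≤ d) : phi k d (NN k d p q) = 0 := by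
  rw [NN, map_sub, phi_ZZ p (q+1) (by omega) hq, phi_ZZ (p+1) q hp (by omega),
    show p + (q+1) = (p+1) + q by omega, sub_self]

lemma phi_Mon (e : ℕ) (he : e ≤ 2*d) :
    phi k d (Mon k d e) = X 0 ^ (2*d - e) * X 1 ^ e := by
  rw [Mon, phi_ZZ _ _ (by omega) (by omega), show e/2 + (e+1)/2 = e by omega]

lemma phi_Ff (i : ℕ) (h : i + 2 ≤ d) : phi k d (Ff k d i) = 0 := by
  rw [Ff, map_sub, phi_ZZ i (i+2) (by omega) h, phi_ZZ (i+1) (i+1) (by omega) (by omega),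
    show i + (i+2) = (i+1) + (i+1) by omega, sub_self]

lemma phi_Gg (i j : ℕ) (hij : i < j) (h : j + 2 ≤ d) : phi k d (Gg k d i j) = 0 := by
  have expand : Gg k d i j =
      (Z k d i * Z k d (i+2) - Z k d (i+1) * Z k d (i+1))
      + (Z k d j * Z k d (j+2) - Z k d (j+1) * Z k d (j+1))
      + (Z k d i * Z k d (j+2) - Z k d (i+1) * Z k d (j+1))
      + (Z k d j * Z k d (i+2) - Z k d (i+1) * Z k d (j+1)) := by
    rw [Gg]; ring
  rw [expand, map_add, map_add, map_add, map_sub, map_sub, map_sub, map_sub,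
    phi_ZZ i (i+2) (by omega) (by omega), phi_ZZ (i+1) (i+1) (by omega) (by omega),
    phi_ZZ j (j+2) (by omega) (by omega), phi_ZZ (j+1) (j+1) (by omega) (by omega),
    phi_ZZ i (j+2) (by omega) (by omega), phi_ZZ (i+1) (j+1) (by omega) (by omega),
    phi_ZZ j (i+2) (by omega) (by omega),
    show i + (i+2) = (i+1) + (i+1) by omega,
    show j + (j+2) = (j+1) + (j+1) by omega,
    show i + (j+2) = (i+1) + (j+1) by omega,
    show j + (i+2) = (i+1) + (j+1) by omega]
  ring

lemma Ff_isHomogeneous (i : ℕ) (h : i + 2 ≤ d) : (Ff k d i).IsHomogeneous 2 := by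
  rw [Ff, Zeq i (by omega), Zeq (i+1) (by omega), Zeq (i+2) (by omega)]
  have := ((isHomogeneous_X k (⟨i, by omega⟩ : Fin (d+1))).mul
      (isHomogeneous_X k (⟨i+2, by omega⟩ : Fin (d+1)))).sub
    ((isHomogeneous_X k (⟨i+1, by omega⟩ : Fin (d+1))).mul
      (isHomogeneous_X k (⟨i+1, by omega⟩ : Fin (d+1))))
  simpa using this

lemma Gg_isHomogeneous (i j : ℕ) (hij : i < j) (h : j + 2 ≤ d) :
    (Gg k d i j).IsHomogeneous 2 := by
  rw [Gg, Zeq i (by omega), Zeq (i+1) (by omega), Zeq (i+2) (by omega),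
    Zeq j (by omega), Zeq (j+1) (by omega), Zeq (j+2) (by omega)]
  have h1 : ∀ (a b : Fin (d+1)),
      ((X a + X b) * (X a + X b) : MvPolynomial (Fin (d+1)) k).IsHomogeneous 2 := by
    intro a b
    have := (((isHomogeneous_X k a).add (isHomogeneous_X k b)).mul
      ((isHomogeneous_X k a).add (isHomogeneous_X k b)))
    simpa using this
  have h2 : ∀ (a b a' b' : Fin (d+1)),
      ((X a + X b) * (X a' + X b') : MvPolynomial (Fin (d+1)) k).IsHomogeneous 2 := by
    intro a b a' b'
    have := (((isHomogeneous_X k a).add (isHomogeneous_X k b)).mul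
      ((isHomogeneous_X k a').add (isHomogeneous_X k b')))
    simpa using this
  exact (h2 _ _ _ _).sub (h1 _ _)

lemma NN_mem_MSpan (p q : ℕ) (h1 : p < q) (h2 : q ≤ d - 1) : NN k d p q ∈ MSpan k d :=
  Submodule.subset_span ⟨p, q, h1, h2, rfl⟩

lemma reduce_aux (hd : 1 ≤ d) :
    ∀ g m n : ℕ, n - m ≤ g → m ≤ n → n ≤ d →
      Z k d m * Z k d n - Mon k d (m+n) ∈ MSpan k d := by
  intro g
  induction g with
  | zero =>
    intro m n h1 h2 h3
    have hnm : n = m := by omega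
    subst hnm
    rw [Mon, show (n+n)/2 = n by omega, show (n+n+1)/2 = n by omega, sub_self]
    exact zero_mem _
  | succ g ih =>
    intro m n h1 h2 h3
    by_cases hg : n - m ≤ g
    · exact ih m n hg h2 h3
    by_cases h4 : n ≤ m + 1
    · rcases (by omega : n = m ∨ n = m + 1) with rfl | rfl
      · rw [Mon, show (n+n)/2 = n by omega, show (n+n+1)/2 = n by omega, sub_self]
        exact zero_mem _
      · rw [Mon, show (m+(m+1))/2 = m by omega, show (m+(m+1)+1)/2 = m+1 by omega, sub_self]
        exact zero_mem _
    · have key : Z k d m * Z k d n - Mon k d (m+n)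
          = NN k d m (n-1) + (Z k d (m+1) * Z k d (n-1) - Mon k d ((m+1)+(n-1))) := by
        rw [NN, show (n-1)+1 = n by omega, show (m+1)+(n-1) = m+n by omega]
        ring
      rw [key]
      exact add_mem (NN_mem_MSpan m (n-1) (by omega) (by omega))
        (ih (m+1) (n-1) (by omega) (by omega) (by omega))

lemma reduce (hd : 1 ≤ d) (m n : ℕ) (h2 : m ≤ n) (h3 : n ≤ d) :
    Z k d m * Z k d n - Mon k d (m+n) ∈ MSpan k d :=
  reduce_aux hd (n - m) m n le_rfl h2 h3


lemma exists_two (μ : Fin (d+1) →₀ ℕ) (hμ : ∑ v, μ v = 2) :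
    ∃ m n : Fin (d+1), μ = Finsupp.single m 1 + Finsupp.single n 1 := by
  classical
  have hm : ∃ m : Fin (d+1), μ m ≠ 0 := by
    by_contra hc
    push_neg at hc
    rw [Finset.sum_eq_zero (fun v _ => hc v)] at hμ
    omega
  obtain ⟨m, hm⟩ := hm
  have hsplit : ∑ v ∈ Finset.univ.erase m, μ v + μ m = 2 := by
    rw [Finset.sum_erase_add _ _ (Finset.mem_univ m)]; exact hμ
  by_cases h2 : μ m = 2
  · refine ⟨m, m, ?_⟩
    have hz : ∀ v ∈ Finset.univ.erase m, μ v = 0 := by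
      rw [← Finset.sum_eq_zero_iff]
      omega
    ext v
    rcases eq_or_ne v m with rfl | hvm
    · simp [h2, Finsupp.single_apply]
    · have := hz v (Finset.mem_erase.mpr ⟨hvm, Finset.mem_univ v⟩)
      simp [this, Finsupp.single_apply, hvm, Ne.symm hvm]
  · have h1 : μ m = 1 := by omega
    have hrest : ∑ v ∈ Finset.univ.erase m, μ v = 1 := by omega
    have hn : ∃ n ∈ Finset.univ.erase m, μ n ≠ 0 := by
      by_contra hc
      push_neg at hc
      rw [Finset.sum_eq_zero hc] at hrest
      omega
    obtain ⟨n, hnmem, hn⟩ := hn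
    have hsplit2 : ∑ v ∈ (Finset.univ.erase m).erase n, μ v + μ n = 1 := by
      rw [Finset.sum_erase_add _ _ hnmem]; exact hrest
    have hn1 : μ n = 1 := by omega
    have hz : ∀ v ∈ (Finset.univ.erase m).erase n, μ v = 0 := by
      rw [← Finset.sum_eq_zero_iff]
      omega
    have hnm : n ≠ m := (Finset.mem_erase.mp hnmem).1
    refine ⟨m, n, ?_⟩
    ext v
    rcases eq_or_ne v m with rfl | hvm
    · simp [h1, Finsupp.single_apply, hnm]
    · rcases eq_or_ne v n with rfl | hvn
      · simp [hn1, Finsupp.single_apply, hvm, Ne.symm hvm]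
      · have := hz v (Finset.mem_erase.mpr ⟨hvn, Finset.mem_erase.mpr ⟨hvm, Finset.mem_univ v⟩⟩)
        simp [this, Finsupp.single_apply, Ne.symm hvm, Ne.symm hvn]

/-- the weighted degree of an exponent vector -/
def wdeg (μ : Fin (d+1) →₀ ℕ) : ℕ := μ.sum fun v c => c * v.1

lemma wdeg_pair (m n : Fin (d+1)) :
    wdeg (Finsupp.single m 1 + Finsupp.single n 1) = m.1 + n.1 := by
  rw [wdeg, Finsupp.sum_add_index (by simp) (by intros; ring),
    Finsupp.sum_single_index (by simp), Finsupp.sum_single_index (by simp), one_mul, one_mul]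

lemma mono_ZZ (m n : Fin (d+1)) :
    (monomial (Finsupp.single m 1 + Finsupp.single n 1) (1:k)) = Z k d m.1 * Z k d n.1 := by
  rw [Zeq _ (by omega : m.1 ≤ d), Zeq _ (by omega : n.1 ≤ d)]
  rw [show (⟨m.1, by omega⟩ : Fin (d+1)) = m from Fin.eta m _,
    show (⟨n.1, by omega⟩ : Fin (d+1)) = n from Fin.eta n _]
  rw [X, X, monomial_mul, mul_one]

lemma MSpan_le_ker (hd : 1 ≤ d) : MSpan k d ≤ LinearMap.ker (phi k d).toLinearMap := by
  rw [MSpan, Submodule.span_le]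
  rintro x ⟨p, q, h1, h2, rfl⟩
  simp only [SetLike.mem_coe, LinearMap.mem_ker, AlgHom.toLinearMap_apply]
  exact phi_NN p q (by omega) (by omega)

theorem mem_MSpan_of_ker (hd : 1 ≤ d) {f : MvPolynomial (Fin (d+1)) k}
    (hf : f.IsHomogeneous 2) (hv : phi k d f = 0) : f ∈ MSpan k d := by
  classical
  have hdec : ∀ μ ∈ f.support, ∃ m n : Fin (d+1), μ = Finsupp.single m 1 + Finsupp.single n 1 := by
    intro μ hμ
    apply exists_two
    have h := hf (mem_support_iff.mp hμ)
    rw [Finsupp.weight_apply] at h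
    rw [Finsupp.sum_fintype _ _ (fun i => by simp)] at h
    simpa using h
  have hwle : ∀ μ ∈ f.support, wdeg μ ≤ 2*d := by
    intro μ hμ
    obtain ⟨m, n, rfl⟩ := hdec μ hμ
    rw [wdeg_pair]
    have := m.2; have := n.2; omega
  have hmonM : ∀ μ ∈ f.support, (monomial μ (1:k)) - Mon k d (wdeg μ) ∈ MSpan k d := by
    intro μ hμ
    obtain ⟨m, n, rfl⟩ := hdec μ hμ
    rw [mono_ZZ, wdeg_pair]
    rcases le_total m.1 n.1 with hmn | hmn
    · exact reduce hd m.1 n.1 hmn (by omega)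
    · rw [mul_comm, show m.1 + n.1 = n.1 + m.1 by omega]
      exact reduce hd n.1 m.1 hmn (by omega)
  have hfe : f = ∑ μ ∈ f.support, (coeff μ f) • (monomial μ (1:k)) := by
    conv_lhs => rw [f.as_sum]
    exact Finset.sum_congr rfl fun μ _ => by rw [smul_monomial, smul_eq_mul, mul_one]
  set P : MvPolynomial (Fin (d+1)) k := ∑ μ ∈ f.support, (coeff μ f) • Mon k d (wdeg μ) with hP
  have h1 : f - P ∈ MSpan k d := by
    have hsub : f - P = ∑ μ ∈ f.support,
        (coeff μ f) • ((monomial μ (1:k)) - Mon k d (wdeg μ)) := by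
      rw [Finset.sum_congr rfl (fun μ _ => smul_sub (coeff μ f) _ _), Finset.sum_sub_distrib,
        ← hfe, ← hP]
    rw [hsub]
    exact Submodule.sum_smul_mem _ _ hmonM
  have h2 : phi k d P = 0 := by
    have hker := MSpan_le_ker hd h1
    rw [LinearMap.mem_ker, AlgHom.toLinearMap_apply, map_sub, hv, zero_sub, neg_eq_zero] at hker
    exact hker
  have h3 : ∀ e : ℕ, ∑ μ ∈ f.support, (if wdeg μ = e then coeff μ f else 0) = 0 := by
    intro e
    have hco := congrArg
      (MvPolynomial.coeff (Finsupp.single (0 : Fin 2) (2*d - e) + Finsupp.single (1 : Fin 2) e)) h2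
    rw [hP, map_sum, MvPolynomial.coeff_sum, MvPolynomial.coeff_zero] at hco
    have keyterm : ∀ μ ∈ f.support,
        MvPolynomial.coeff (Finsupp.single (0 : Fin 2) (2*d - e) + Finsupp.single (1 : Fin 2) e)
          ((phi k d) (coeff μ f • Mon k d (wdeg μ))) = if wdeg μ = e then coeff μ f else 0 := by
      intro μ hμ
      rw [map_smul, phi_Mon _ (hwle μ hμ), X_pow_eq_monomial, X_pow_eq_monomial, monomial_mul,
        mul_one, MvPolynomial.coeff_smul, coeff_monomial, smul_eq_mul, mul_ite, mul_one, mul_zero]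
      by_cases hwe : wdeg μ = e
      · rw [if_pos hwe, if_pos (by rw [hwe])]
      · rw [if_neg hwe, if_neg]
        intro hcontra
        apply hwe
        have := DFunLike.congr_fun hcontra (1 : Fin 2)
        simpa using this
    rw [Finset.sum_congr rfl keyterm] at hco
    exact hco
  have h4 : P = 0 := by
    rw [hP, ← Finset.sum_fiberwise_of_maps_to (g := wdeg) (t := Finset.range (2*d+1))
      (fun μ hμ => Finset.mem_range.mpr (by have := hwle μ hμ; omega))]
    apply Finset.sum_eq_zero
    intro e _
    calc ∑ μ ∈ f.support.filter (fun μ => wdeg μ = e), coeff μ f • Mon k d (wdeg μ)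
        = ∑ μ ∈ f.support.filter (fun μ => wdeg μ = e), coeff μ f • Mon k d e := by
          apply Finset.sum_congr rfl
          intro μ hμ
          rw [(Finset.mem_filter.mp hμ).2]
      _ = (∑ μ ∈ f.support.filter (fun μ => wdeg μ = e), coeff μ f) • Mon k d e := by
          rw [Finset.sum_smul]
      _ = 0 := by
          rw [Finset.sum_filter, h3 e, zero_smul]
  have := h1
  rwa [h4, sub_zero] at this


lemma sum_subtype_delta {α : Type*} [DecidableEq α] {p : α → Prop} [Fintype (Subtype p)]
    [DecidablePred p] (g : Subtype p → k) (y : α) :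
    ∑ i : Subtype p, (if i.1 = y then g i else 0) = if h : p y then g ⟨y, h⟩ else 0 := by
  split_ifs with h
  · have hrw := Finset.sum_ite_eq' Finset.univ (⟨y, h⟩ : Subtype p) g
    rw [if_pos (Finset.mem_univ _)] at hrw
    rw [← hrw]
    exact Finset.sum_congr rfl fun i _ => if_congr
      ⟨fun hh => Subtype.ext hh, fun hh => by rw [hh]⟩ rfl rfl
  · exact Finset.sum_eq_zero fun i _ => if_neg (fun hh => h (by rw [← hh]; exact i.2))

def pairsBelow (n : ℕ) : Finset (ℕ × ℕ) :=
  (Finset.range (n+1)).biUnion fun q => (Finset.range q).image fun p => (p, q)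

lemma mem_pairsBelow {n : ℕ} {x : ℕ × ℕ} : x ∈ pairsBelow n ↔ x.1 < x.2 ∧ x.2 ≤ n := by
  obtain ⟨p, q⟩ := x
  simp only [pairsBelow, Finset.mem_biUnion, Finset.mem_image, Finset.mem_range, Nat.lt_succ_iff]
  constructor
  · rintro ⟨a, ha, b, hb, hab⟩
    obtain ⟨rfl, rfl⟩ := Prod.mk.injEq .. ▸ hab
    simp only at *
    omega
  · rintro ⟨h1, h2⟩
    exact ⟨q, h2, p, h1, rfl⟩

lemma card_pairsBelow (n : ℕ) : (pairsBelow n).card = (n+1).choose 2 := by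
  rw [pairsBelow, Finset.card_biUnion]
  · have hc : ∀ q ∈ Finset.range (n+1), ((Finset.range q).image fun p => (p, q)).card = q := by
      intro q _
      rw [Finset.card_image_of_injective _ (fun a b h => (Prod.mk.injEq ..).mp h |>.1),
        Finset.card_range]
    rw [Finset.sum_congr rfl hc]
    have := Finset.sum_range_id_mul_two (n+1)
    rw [Nat.choose_two_right]
    omega
  · intro x _ y _ hxy
    rw [Function.onFun, Finset.disjoint_left]
    rintro ⟨a, b⟩ ha hb
    simp only [Finset.mem_image, Finset.mem_range] at ha hb
    obtain ⟨_, _, h1⟩ := ha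
    obtain ⟨_, _, h2⟩ := hb
    apply hxy
    have e1 := (Prod.mk.injEq ..).mp h1
    have e2 := (Prod.mk.injEq ..).mp h2
    omega

def fintypePairs (n : ℕ) : Fintype {x : ℕ × ℕ // x.1 < x.2 ∧ x.2 ≤ n} :=
  Fintype.ofFinset (pairsBelow n) (fun _ => mem_pairsBelow)

lemma card_fintypePairs (n : ℕ) : @Fintype.card _ (fintypePairs n) = (n+1).choose 2 := by
  rw [← card_pairsBelow n]
  exact Fintype.card_ofFinset _ _

def fintypeIic (n : ℕ) : Fintype {i : ℕ // i ≤ n} :=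
  Fintype.ofFinset (Finset.range (n+1)) (fun _ => by simp [Nat.lt_succ_iff]; exact Iff.rfl)

theorem minors_indep (hd : 1 ≤ d) :
    LinearIndependent k
      (fun x : {x : ℕ × ℕ // x.1 < x.2 ∧ x.2 ≤ d-1} => NN k d x.1.1 x.1.2) := by
  letI := fintypePairs (d-1)
  classical
  rw [Fintype.linearIndependent_iff]
  intro g hg i
  set c : ℕ × ℕ → k := fun x => if h : x.1 < x.2 ∧ x.2 ≤ d-1 then g ⟨x, h⟩ else 0 with hc
  have hc0 : ∀ x : ℕ × ℕ, ¬(x.1 < x.2 ∧ x.2 ≤ d-1) → c x = 0 := fun x h => dif_neg h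
  have key : ∀ a b : ℕ, a < b → b ≤ d →
      c (a, b-1) - (if 1 ≤ a then c (a-1, b) else 0) = 0 := by
    intro a b hab hb
    have h0 := congrArg (lam k d a b) hg
    rw [map_sum, map_zero] at h0
    have hterm : ∀ i : {x : ℕ × ℕ // x.1 < x.2 ∧ x.2 ≤ d-1},
        lam k d a b (g i • NN k d i.1.1 i.1.2)
          = (if i.1 = (a, b-1) then g i else 0)
            - (if 1 ≤ a then (if i.1 = (a-1, b) then g i else 0) else 0) := by
      rintro ⟨⟨p, q⟩, hpq⟩
      simp only at hpq
      rw [map_smul, NN, map_sub, smul_sub,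
        lam_ZZ a b p (q+1) (by omega) (by omega) (by omega),
        lam_ZZ a b (p+1) q (by omega) (by omega) (by omega)]
      have e1 : ((p = a ∧ q+1 = b) ∨ (p = b ∧ q+1 = a)) ↔ ((p, q) = ((a : ℕ), (b-1 : ℕ))) := by
        simp only [Prod.mk.injEq]; omega
      have e2 : ((p+1 = a ∧ q = b) ∨ (p+1 = b ∧ q = a)) ↔
          (1 ≤ a ∧ (p, q) = ((a-1 : ℕ), (b : ℕ))) := by
        simp only [Prod.mk.injEq]; omega
      simp only [e1, e2]
      by_cases ha : 1 ≤ a <;> by_cases hp1 : (p, q) = ((a : ℕ), (b-1 : ℕ)) <;>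
        by_cases hp2 : (p, q) = ((a-1 : ℕ), (b : ℕ)) <;>
        simp [ha, hp1, hp2, smul_eq_mul]
    rw [Finset.sum_congr rfl (fun i _ => hterm i), Finset.sum_sub_distrib,
      sum_subtype_delta g ((a : ℕ), (b-1 : ℕ))] at h0
    have hsum2 : (∑ i : {x : ℕ × ℕ // x.1 < x.2 ∧ x.2 ≤ d-1},
        (if 1 ≤ a then (if i.1 = ((a-1 : ℕ), (b : ℕ)) then g i else 0) else 0))
        = if 1 ≤ a then c (a-1, b) else 0 := by
      by_cases ha : 1 ≤ a
      · simp only [if_pos ha]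
        exact sum_subtype_delta g _
      · simp only [if_neg ha, Finset.sum_const_zero]
    rw [hsum2] at h0
    exact h0
  have main : ∀ p q : ℕ, c (p, q) = 0 := by
    intro p
    induction p with
    | zero =>
      intro q
      by_cases hv : 0 < q ∧ q ≤ d-1
      · have hk := key 0 (q+1) (by omega) (by omega)
        simpa using hk
      · exact hc0 _ hv
    | succ p ih =>
      intro q
      by_cases hv : p+1 < q ∧ q ≤ d-1
      · have hk := key (p+1) (q+1) (by omega) (by omega)
        rw [show (p+1) - 1 = p by omega, show (q+1) - 1 = q by omega, if_pos (by omega)] at hk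
        rw [ih (q+1)] at hk
        simpa using hk
      · exact hc0 _ hv
  have hfin := main i.1.1 i.1.2
  rw [hc] at hfin
  simp only at hfin
  rwa [dif_pos (by exact i.2)] at hfin


lemma Gg_expand (i j : ℕ) :
    Gg k d i j = Ff k d i + Ff k d j + NN k d i (j+1) - NN k d (i+1) j := by
  rw [Gg, Ff, Ff, NN, NN]
  ring

lemma NN_mem_spanFG (hd : 3 ≤ d) {W : Submodule k (MvPolynomial (Fin (d+1)) k)}
    (hF : ∀ i, i ≤ d-2 → Ff k d i ∈ W)
    (hG : ∀ i j, i < j → j ≤ d-2 → Gg k d i j ∈ W) :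
    ∀ p q : ℕ, p < q → q ≤ d-1 → NN k d p q ∈ W := by
  have key : ∀ g p q : ℕ, q - p ≤ g + 1 → p < q → q ≤ d-1 → NN k d p q ∈ W := by
    intro g
    induction g with
    | zero =>
      intro p q h1 h2 h3
      have hq : q = p + 1 := by omega
      subst hq
      have : NN k d p (p+1) = Ff k d p := by rw [NN, Ff]
      rw [this]
      exact hF p (by omega)
    | succ g ih =>
      intro p q h1 h2 h3
      by_cases h4 : q - p ≤ g + 1
      · exact ih p q h4 h2 h3
      have hq2 : p + 2 ≤ q := by omega
      have hid : NN k d p q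
          = Gg k d p (q-1) - Ff k d p - Ff k d (q-1) + NN k d (p+1) (q-1) := by
        rw [Gg_expand, show (q-1)+1 = q by omega]
        abel
      rw [hid]
      have hGm : Gg k d p (q-1) ∈ W := hG p (q-1) (by omega) (by omega)
      have hF1 : Ff k d p ∈ W := hF p (by omega)
      have hF2 : Ff k d (q-1) ∈ W := hF (q-1) (by omega)
      have hNm : NN k d (p+1) (q-1) ∈ W := by
        by_cases h5 : p + 1 < q - 1
        · exact ih (p+1) (q-1) (by omega) h5 (by omega)
        · have : p + 1 = q - 1 := by omega
          rw [← this]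
          have hz : NN k d (p+1) (p+1) = 0 := by rw [NN]; ring
          rw [hz]
          exact zero_mem _
      exact add_mem (sub_mem (sub_mem hGm hF1) hF2) hNm
  intro p q h1 h2
  exact key (q - p) p q (by omega) h1 h2


end RNCaux

end RNCauxSec

open RNCaux in

/-- The degree-2 part of the homogeneous ideal of the rational normal curve `C_d ⊂ P^d` has
dimension `binomial(d,2)`, and the family `Γ` of the `(d−1) + binomial(d−1,2) = binomial(d,2)`
rank-3 quadrics `F_i = z_i z_{i+2} − z_{i+1}²` and
`G_{i,j} = (z_i+z_j)(z_{i+2}+z_{j+2}) − (z_{i+1}+z_{j+1})²` is a basis of it: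
`Γ` is linearly independent and its span is exactly the space of quadratic forms vanishing on
the curve (i.e. mapped to `0` under `z_m ↦ s^{d−m} t^m`). -/
theorem stmt_10 {k : Type*} [Field k] (hchar : ringChar k ≠ 2) (d : ℕ) (hd : 3 ≤ d)
    (Γ : ({i : ℕ // i ≤ d - 2} ⊕ {p : ℕ × ℕ // p.1 < p.2 ∧ p.2 ≤ d - 2}) →
      MvPolynomial (Fin (d + 1)) k)
    (hΓ : Γ = Sum.elim
      (fun i : {i : ℕ // i ≤ d - 2} =>
        X ⟨i.1, by have := i.2; omega⟩ * X ⟨i.1 + 2, by have := i.2; omega⟩ -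
          X ⟨i.1 + 1, by have := i.2; omega⟩ ^ 2)
      (fun p : {p : ℕ × ℕ // p.1 < p.2 ∧ p.2 ≤ d - 2} =>
        (X ⟨p.1.1, by have := p.2; omega⟩ + X ⟨p.1.2, by have := p.2; omega⟩) *
            (X ⟨p.1.1 + 2, by have := p.2; omega⟩ + X ⟨p.1.2 + 2, by have := p.2; omega⟩) -
          (X ⟨p.1.1 + 1, by have := p.2; omega⟩ + X ⟨p.1.2 + 1, by have := p.2; omega⟩) ^ 2)) :
    LinearIndependent k Γ ∧
    (∀ q : MvPolynomial (Fin (d + 1)) k,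
      (q.IsHomogeneous 2 ∧
        aeval (fun m : Fin (d + 1) => (X 0 : MvPolynomial (Fin 2) k) ^ (d - m.1) * X 1 ^ m.1)
          q = 0) ↔ q ∈ Submodule.span k (Set.range Γ)) ∧
    (d - 1) + Nat.choose (d - 1) 2 = Nat.choose d 2 ∧
    Module.finrank k ↥(Submodule.span k (Set.range Γ)) = Nat.choose d 2 := by
  classical
  set W := Submodule.span k (Set.range Γ) with hW
  -- identify the family with Ff / Gg
  have hF : ∀ (i : {i : ℕ // i ≤ d - 2}), Γ (Sum.inl i) = Ff k d i.1 := by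
    intro i
    rw [hΓ]
    simp only [Sum.elim_inl]
    rw [Ff, Zeq i.1 (by have := i.2; omega), Zeq (i.1+1) (by have := i.2; omega),
      Zeq (i.1+2) (by have := i.2; omega), ← pow_two]
  have hG : ∀ (p : {p : ℕ × ℕ // p.1 < p.2 ∧ p.2 ≤ d - 2}),
      Γ (Sum.inr p) = Gg k d p.1.1 p.1.2 := by
    intro p
    rw [hΓ]
    simp only [Sum.elim_inr]
    rw [Gg, Zeq p.1.1 (by have := p.2; omega), Zeq (p.1.1+1) (by have := p.2; omega),
      Zeq (p.1.1+2) (by have := p.2; omega), Zeq p.1.2 (by have := p.2; omega),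
      Zeq (p.1.2+1) (by have := p.2; omega), Zeq (p.1.2+2) (by have := p.2; omega), ← pow_two]
  have hFW : ∀ i, i ≤ d - 2 → Ff k d i ∈ W := by
    intro i hi
    rw [← hF ⟨i, hi⟩]
    exact Submodule.subset_span (Set.mem_range_self _)
  have hGW : ∀ i j, i < j → j ≤ d - 2 → Gg k d i j ∈ W := by
    intro i j hij hj
    rw [← hG ⟨(i, j), ⟨hij, hj⟩⟩]
    exact Submodule.subset_span (Set.mem_range_self _)
  have hNNW : ∀ p q : ℕ, p < q → q ≤ d - 1 → NN k d p q ∈ W :=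
    NN_mem_spanFG hd hFW hGW
  -- the iff
  have hIff : ∀ q : MvPolynomial (Fin (d + 1)) k,
      (q.IsHomogeneous 2 ∧
        aeval (fun m : Fin (d + 1) => (X 0 : MvPolynomial (Fin 2) k) ^ (d - m.1) * X 1 ^ m.1)
          q = 0) ↔ q ∈ W := by
    intro q
    constructor
    · rintro ⟨hq1, hq2⟩
      have hms : q ∈ MSpan k d := mem_MSpan_of_ker (by omega) hq1 hq2
      have hle : MSpan k d ≤ W := by
        rw [MSpan, Submodule.span_le]
        rintro x ⟨p, q', h1, h2, rfl⟩
        exact hNNW p q' h1 h2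
      exact hle hms
    · intro hq
      have hle : W ≤ (homogeneousSubmodule (Fin (d+1)) k 2) ⊓
          LinearMap.ker (phi k d).toLinearMap := by
        rw [hW, Submodule.span_le]
        rintro x ⟨γ, rfl⟩
        rcases γ with i | p
        · rw [hF i]
          refine Submodule.mem_inf.mpr ⟨?_, ?_⟩
          · exact (mem_homogeneousSubmodule _ _).mpr
              (Ff_isHomogeneous i.1 (by have := i.2; omega))
          · rw [LinearMap.mem_ker, AlgHom.toLinearMap_apply]
            exact phi_Ff i.1 (by have := i.2; omega)
        · rw [hG p]
          refine Submodule.mem_inf.mpr ⟨?_, ?_⟩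
          · exact (mem_homogeneousSubmodule _ _).mpr
              (Gg_isHomogeneous p.1.1 p.1.2 p.2.1 (by have := p.2; omega))
          · rw [LinearMap.mem_ker, AlgHom.toLinearMap_apply]
            exact phi_Gg p.1.1 p.1.2 p.2.1 (by have := p.2; omega)
      have := hle hq
      rw [Submodule.mem_inf, mem_homogeneousSubmodule, LinearMap.mem_ker,
        AlgHom.toLinearMap_apply] at this
      exact this
  -- Fintype instances
  letI iIic : Fintype {i : ℕ // i ≤ d - 2} := fintypeIic (d-2)
  letI iFP2 : Fintype {p : ℕ × ℕ // p.1 < p.2 ∧ p.2 ≤ d - 2} := fintypePairs (d-2)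
  letI iFP1 : Fintype {x : ℕ × ℕ // x.1 < x.2 ∧ x.2 ≤ d - 1} := fintypePairs (d-1)
  -- the equivalence between the two index types
  let e : ({i : ℕ // i ≤ d - 2} ⊕ {p : ℕ × ℕ // p.1 < p.2 ∧ p.2 ≤ d - 2})
      ≃ {x : ℕ × ℕ // x.1 < x.2 ∧ x.2 ≤ d - 1} :=
    { toFun := Sum.elim (fun i => ⟨(i.1, i.1 + 1), by have := i.2; omega⟩)
        (fun p => ⟨(p.1.1, p.1.2 + 1), by have := p.2; omega⟩)
      invFun := fun x => if h : x.1.2 = x.1.1 + 1 then Sum.inl ⟨x.1.1, by have := x.2; omega⟩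
        else Sum.inr ⟨(x.1.1, x.1.2 - 1), by have := x.2; omega⟩
      left_inv := by
        rintro (i | p)
        · dsimp only [Sum.elim_inl]
          rw [dif_pos rfl]
        · dsimp only [Sum.elim_inr]
          rw [dif_neg (by have := p.2.1; omega)]
          exact congrArg Sum.inr (Subtype.ext (by simp))
      right_inv := by
        rintro ⟨⟨p, q⟩, h⟩
        dsimp only
        by_cases hq : q = p + 1
        · rw [dif_pos hq]
          dsimp only [Sum.elim_inl]
          exact Subtype.ext (by simp [hq])
        · rw [dif_neg hq]
          dsimp only [Sum.elim_inr]
          refine Subtype.ext ?_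
          have hqq : q - 1 + 1 = q := by have := h.1; omega
          simp [hqq] }
  -- the minor family
  set Mfam : {x : ℕ × ℕ // x.1 < x.2 ∧ x.2 ≤ d - 1} → MvPolynomial (Fin (d+1)) k :=
    fun x => NN k d x.1.1 x.1.2 with hMfam
  have hMind : LinearIndependent k Mfam := minors_indep (by omega)
  have hMW : ∀ i, Mfam i ∈ W := fun i => hNNW i.1.1 i.1.2 i.2.1 i.2.2
  haveI hWfd : FiniteDimensional k W :=
    FiniteDimensional.span_of_finite k (Set.finite_range Γ)
  set Mfam' : {x : ℕ × ℕ // x.1 < x.2 ∧ x.2 ≤ d - 1} → W := fun i => ⟨Mfam i, hMW i⟩ with hMfam'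
  have hMind' : LinearIndependent k Mfam' := by
    apply LinearIndependent.of_comp W.subtype
    exact hMind
  have hcard_le : Fintype.card {x : ℕ × ℕ // x.1 < x.2 ∧ x.2 ≤ d - 1}
      ≤ Module.finrank k W := hMind'.fintype_card_le_finrank
  have hle2 : Module.finrank k W
      ≤ Fintype.card ({i : ℕ // i ≤ d - 2} ⊕ {p : ℕ × ℕ // p.1 < p.2 ∧ p.2 ≤ d - 2}) :=
    finrank_range_le_card Γ
  have hcards : Fintype.card ({i : ℕ // i ≤ d - 2} ⊕ {p : ℕ × ℕ // p.1 < p.2 ∧ p.2 ≤ d - 2})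
      = Fintype.card {x : ℕ × ℕ // x.1 < x.2 ∧ x.2 ≤ d - 1} := Fintype.card_congr e
  have hcardP : Fintype.card {x : ℕ × ℕ // x.1 < x.2 ∧ x.2 ≤ d - 1} = d.choose 2 := by
    rw [card_fintypePairs (d-1), show d - 1 + 1 = d by omega]
  have hfr : Module.finrank k W = d.choose 2 := by
    have h1 : Module.finrank k W = Fintype.card {x : ℕ × ℕ // x.1 < x.2 ∧ x.2 ≤ d - 1} :=
      le_antisymm (hcards ▸ hle2) hcard_le
    rw [h1, hcardP]
  have hpascal : (d - 1) + Nat.choose (d - 1) 2 = Nat.choose d 2 := by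
    conv_rhs => rw [show d = (d - 1) + 1 by omega]
    rw [Nat.choose_succ_succ, Nat.choose_one_right]
  refine ⟨?_, hIff, hpascal, hfr⟩
  rw [linearIndependent_iff_card_eq_finrank_span]
  rw [Set.finrank]
  rw [hcards, hcardP, ← hW, hfr]
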